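/- arXiv:1905.05236 — 9 statements merged into one kernel-verified Lean document; each statement's English description precedes it below -/
import Mathlib

section
/- Let F be a norm on ℝ² with F(x,y) = F(|x|,|y|). Suppose P = (x,y) and P' = (x',y') satisfy F(P) = F(P'), 0 < x' < x, and 0 < |y| < y'. Then for every integer d ≥ 1, F(P - d·P') < F(P) + d·F(P'). -/
theorem stmt_3 (F : ℝ × ℝ → ℝ)
    (hnonneg : ∀ P, 0 ≤ F P)
    (hzero : ∀ P, F P = 0 ↔ P = 0)
    (hhom : ∀ (t : ℝ) (P), F (t • P) = |t| * F P)
    (htri : ∀ P Q, F (P + Q) ≤ F P + F Q)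
    (hsym : ∀ x y : ℝ, F (x, y) = F (|x|, |y|))
    (x y x' y' : ℝ)
    (heq : F (x, y) = F (x', y'))
    (hx' : 0 < x') (hxx : x' < x)
    (hy : 0 < |y|) (hyy : |y| < y') :
    ∀ d : ℕ, 1 ≤ d →
      F ((x, y) - (d : ℝ) • (x', y')) < F (x, y) + (d : ℝ) * F (x', y') := by
  have hy' : 0 < y' := lt_trans hy hyy
  have hx0 : 0 < x := lt_trans hx' hxx
  -- convex combination bound
  have hconv : ∀ (t : ℝ) (A B : ℝ × ℝ), 0 ≤ t → t ≤ 1 →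
      F (t • A + (1 - t) • B) ≤ t * F A + (1 - t) * F B := by
    intro t A B ht ht1
    calc F (t • A + (1 - t) • B) ≤ F (t • A) + F ((1 - t) • B) := htri _ _
      _ = |t| * F A + |1 - t| * F B := by rw [hhom, hhom]
      _ = t * F A + (1 - t) * F B := by
          rw [abs_of_nonneg ht, abs_of_nonneg (by linarith)]
  -- monotone in first coordinate
  have mono1 : ∀ p p' q : ℝ, 0 ≤ p → p ≤ p' → F (p, q) ≤ F (p', q) := by
    intro p p' q hp hpp
    rcases eq_or_lt_of_le (hp.trans hpp) with h0 | h0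
    · have : p = 0 := le_antisymm (hpp.trans h0.symm.le) hp
      rw [this, ← h0]
    · set t : ℝ := (p' + p) / (2 * p') with htdef
      have ht0 : 0 ≤ t := by positivity
      have ht1 : t ≤ 1 := by
        rw [div_le_one (by positivity)]; linarith
      have hpt : t • ((p', q) : ℝ × ℝ) + (1 - t) • ((-p', q) : ℝ × ℝ) = (p, q) := by
        have h1 : t * p' + -((1 - t) * p') = p := by
          have hm : t * (2 * p') = p' + p := by
            rw [htdef]; exact div_mul_cancel₀ _ (by positivity)
          linarith
        have h2 : t * q + (1 - t) * q = q := by ring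
        simp [Prod.ext_iff, Prod.smul_mk, Prod.mk_add_mk, h1, h2]
      have hFneg : F (-p', q) = F (p', q) := by
        rw [hsym (-p') q, hsym p' q, abs_neg]
      have := hconv t (p', q) (-p', q) ht0 ht1
      rw [hpt, hFneg] at this
      calc F (p, q) ≤ t * F (p', q) + (1 - t) * F (p', q) := this
        _ = F (p', q) := by ring
  -- monotone in second coordinate
  have mono2 : ∀ p q q' : ℝ, 0 ≤ q → q ≤ q' → F (p, q) ≤ F (p, q') := by
    intro p q q' hq hqq
    rcases eq_or_lt_of_le (hq.trans hqq) with h0 | h0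
    · have : q = 0 := le_antisymm (hqq.trans h0.symm.le) hq
      rw [this, ← h0]
    · set t : ℝ := (q' + q) / (2 * q') with htdef
      have ht0 : 0 ≤ t := by positivity
      have ht1 : t ≤ 1 := by
        rw [div_le_one (by positivity)]; linarith
      have hpt : t • ((p, q') : ℝ × ℝ) + (1 - t) • ((p, -q') : ℝ × ℝ) = (p, q) := by
        have h1 : t * q' + -((1 - t) * q') = q := by
          have hm : t * (2 * q') = q' + q := by
            rw [htdef]; exact div_mul_cancel₀ _ (by positivity)
          linarith
        have h2 : t * p + (1 - t) * p = p := by ring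
        simp [Prod.ext_iff, Prod.smul_mk, Prod.mk_add_mk, h1, h2]
      have hFneg : F (p, -q') = F (p, q') := by
        rw [hsym p (-q'), hsym p q', abs_neg]
      have := hconv t (p, q') (p, -q') ht0 ht1
      rw [hpt, hFneg] at this
      calc F (p, q) ≤ t * F (p, q') + (1 - t) * F (p, q') := this
        _ = F (p, q') := by ring
  -- equality case propagates along segment
  have hEq : ∀ (A B : ℝ × ℝ), F (A + B) = F A + F B → ∀ t : ℝ, 0 ≤ t → t ≤ 1 →
      F (t • A + (1 - t) • B) = t * F A + (1 - t) * F B := by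
    intro A B hAB t ht0 ht1
    have hle := hconv t A B ht0 ht1
    have hle' := hconv (1 - t) A B (by linarith) (by linarith)
    have hsum : (t • A + (1 - t) • B) + ((1 - t) • A + (1 - (1 - t)) • B) = A + B := by
      module
    have htr : F (A + B) ≤ F (t • A + (1 - t) • B) + F ((1 - t) • A + (1 - (1 - t)) • B) := by
      rw [← hsum]; exact htri _ _
    have h1t : (1 : ℝ) - (1 - t) = t := by ring
    rw [h1t] at hle' htr
    linarith
  set r := F (x, y) with hrdef
  set η := |y| with hηdef
  have hr' : F (x', y') = r := heq.symm
  have hrpos : 0 < r := by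
    rcases lt_or_eq_of_le (hnonneg (x', y')) with h | h
    · rwa [hr'] at h
    · exfalso
      have h2 : ((x', y') : ℝ × ℝ) = 0 := (hzero _).mp h.symm
      rw [Prod.mk_eq_zero] at h2
      linarith [h2.1]
  have hFa : F (x, η) = r := by
    rw [hsym x η, hηdef, abs_abs, ← hsym x y]
  have hFb : F (-x', y') = r := by
    rw [hsym (-x') y', abs_neg, abs_of_pos hx', abs_of_pos hy', ← hr']
  -- key claim: F (x - x', η + y') < 2 r
  have hkey : F (x - x', η + y') < 2 * r := by
    have hle : F (x - x', η + y') ≤ 2 * r := by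
      have h : ((x - x', η + y') : ℝ × ℝ) = (x, η) + (-x', y') := by
        simp [Prod.ext_iff]; ring
      rw [h]
      calc F ((x, η) + (-x', y')) ≤ F (x, η) + F (-x', y') := htri _ _
        _ = 2 * r := by rw [hFa, hFb]; ring
    rcases lt_or_eq_of_le hle with h | habs
    · exact h
    exfalso
    have heq2 : F ((x, η) + ((-x', y') : ℝ × ℝ)) = F (x, η) + F (-x', y') := by
      have h : ((x, η) : ℝ × ℝ) + (-x', y') = (x - x', η + y') := by
        simp [Prod.ext_iff]; ring
      rw [h, habs, hFa, hFb]; ring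
    set t : ℝ := x' / (x + x') with htdef
    have hxx0 : 0 < x + x' := by linarith
    have ht0 : 0 ≤ t := by positivity
    have ht1 : t ≤ 1 := by rw [div_le_one hxx0]; linarith
    have hseg := hEq (x, η) (-x', y') heq2 t ht0 ht1
    set Ys : ℝ := t * η + (1 - t) * y' with hYsdef
    have hpt : t • ((x, η) : ℝ × ℝ) + (1 - t) • ((-x', y') : ℝ × ℝ) = (0, Ys) := by
      have h1 : t * x + -((1 - t) * x') = 0 := by
        have hm : t * (x + x') = x' := by
          rw [htdef]; exact div_mul_cancel₀ _ (by positivity)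
        linarith
      simp [Prod.ext_iff, Prod.smul_mk, Prod.mk_add_mk, h1, hYsdef]
    rw [hpt, hFa, hFb] at hseg
    have hseg' : F (0, Ys) = r := by rw [hseg]; ring
    have hYspos : 0 < Ys := by
      have hη0 : 0 < η := hy
      have : 0 < t := by positivity
      nlinarith [ht1]
    have hYslt : Ys < y' := by
      have htpos : 0 < t := by positivity
      have : Ys = y' - t * (y' - η) := by rw [hYsdef]; ring
      nlinarith
    -- F(0, q) = q * F(0,1)
    have hray : ∀ q : ℝ, 0 < q → F (0, q) = q * F (0, 1) := by
      intro q hq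
      have : ((0, q) : ℝ × ℝ) = q • ((0, 1) : ℝ × ℝ) := by
        simp [Prod.ext_iff]
      rw [this, hhom, abs_of_pos hq]
    have h1 : F (0, y') ≤ r := by
      calc F (0, y') ≤ F (x', y') := mono1 0 x' y' le_rfl hx'.le
        _ = r := hr'
    rw [hray Ys hYspos] at hseg'
    rw [hray y' hy'] at h1
    -- r = Ys * F(0,1), y' * F(0,1) ≤ r, Ys < y'  ⟹ contradiction with r > 0
    have hF01 : 0 < F (0, 1) := by
      rcases lt_or_eq_of_le (hnonneg ((0, 1) : ℝ × ℝ)) with h | h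
      · exact h
      · exfalso; nlinarith [hseg'.symm]
    nlinarith
  -- main chain
  intro d hd
  have hd1 : (1 : ℝ) ≤ (d : ℝ) := by exact_mod_cast hd
  have hsplit : ((x, y) : ℝ × ℝ) - (d : ℝ) • (x', y')
      = ((x, y) - (x', y')) + (-((d : ℝ) - 1)) • (x', y') := by
    module
  have step1 : F ((x, y) - (d : ℝ) • (x', y'))
      ≤ F ((x, y) - (x', y')) + ((d : ℝ) - 1) * r := by
    rw [hsplit]
    calc F (((x, y) - (x', y')) + (-((d : ℝ) - 1)) • (x', y'))
        ≤ F ((x, y) - (x', y')) + F ((-((d : ℝ) - 1)) • (x', y')) := htri _ _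
      _ = F ((x, y) - (x', y')) + ((d : ℝ) - 1) * r := by
          rw [hhom, abs_neg, abs_of_nonneg (by linarith), hr']
  have step2 : F ((x, y) - (x', y')) ≤ F (x - x', η + y') := by
    have h : ((x, y) : ℝ × ℝ) - (x', y') = (x - x', y - y') := by
      simp [Prod.ext_iff]
    rw [h, hsym (x - x') (y - y'), abs_of_nonneg (by linarith : (0:ℝ) ≤ x - x')]
    apply mono2 _ _ _ (abs_nonneg _)
    calc |y - y'| ≤ |y| + |y'| := abs_sub _ _
      _ = η + y' := by rw [hηdef, abs_of_pos hy']
  calc F ((x, y) - (d : ℝ) • (x', y'))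
      ≤ F ((x, y) - (x', y')) + ((d : ℝ) - 1) * r := step1
    _ ≤ F (x - x', η + y') + ((d : ℝ) - 1) * r := by linarith
    _ < 2 * r + ((d : ℝ) - 1) * r := by linarith
    _ = F (x, y) + (d : ℝ) * F (x', y') := by rw [← hrdef, hr']; ring
end

section
/- Let F be a norm on ℝ² with F(x,y) = F(|x|,|y|), and F_t(x,y) = F(x/t, ty). For σ, σ' ∈ [0,1] with σ + σ' = 1 and 1 ≤ t₁ ≤ t₂, and any P ∈ ℝ², one has F_{σt₁ + σ't₂}(P) ≤ σ·F_{t₁}(P) + σ'·F_{t₂}(P). -/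
lemma mono_aux (F : ℝ × ℝ → ℝ)
    (hhom : ∀ (t : ℝ) (P), F (t • P) = |t| * F P)
    (htri : ∀ P Q, F (P + Q) ≤ F P + F Q)
    (hsym : ∀ x y : ℝ, F (x, y) = F (|x|, |y|))
    (a b c : ℝ) (ha : 0 ≤ a) (hab : a ≤ b) : F (a, c) ≤ F (b, c) := by
  rcases eq_or_lt_of_le (ha.trans hab) with hb | hb
  · have : a = 0 := le_antisymm (hab.trans hb.symm.le) ha
    simp [this, ← hb]
  · set l := (b + a) / (2 * b) with hl
    set m := (b - a) / (2 * b) with hm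
    have hl0 : 0 ≤ l := by positivity
    have hm0 : 0 ≤ m := div_nonneg (by linarith) (by linarith)
    have hlm : l + m = 1 := by
      rw [hl, hm, ← add_div, div_eq_one_iff_eq (ne_of_gt (by linarith))]; ring
    have hdecomp : (a, c) = l • ((b, c) : ℝ × ℝ) + m • ((-b, c) : ℝ × ℝ) := by
      have hb' : b ≠ 0 := ne_of_gt hb
      refine Prod.ext ?_ ?_ <;> simp [hl, hm, Prod.smul_mk] <;> field_simp <;> ring
    have hneg : F (-b, c) = F (b, c) := by
      rw [hsym (-b) c, abs_neg, hsym b c]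
    calc F (a, c) = F (l • ((b, c) : ℝ × ℝ) + m • ((-b, c) : ℝ × ℝ)) := by rw [← hdecomp]
      _ ≤ F (l • ((b, c) : ℝ × ℝ)) + F (m • ((-b, c) : ℝ × ℝ)) := htri _ _
      _ = l * F (b, c) + m * F (b, c) := by
          rw [hhom, hhom, abs_of_nonneg hl0, abs_of_nonneg hm0, hneg]
      _ = F (b, c) := by rw [← add_mul, hlm, one_mul]

theorem stmt_4 (F : ℝ × ℝ → ℝ)
    (hnonneg : ∀ P, 0 ≤ F P)
    (hzero : ∀ P, F P = 0 ↔ P = 0)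
    (hhom : ∀ (t : ℝ) (P), F (t • P) = |t| * F P)
    (htri : ∀ P Q, F (P + Q) ≤ F P + F Q)
    (hsym : ∀ x y : ℝ, F (x, y) = F (|x|, |y|))
    (σ σ' t₁ t₂ : ℝ)
    (hσ0 : 0 ≤ σ) (hσ1 : σ ≤ 1) (hσ'0 : 0 ≤ σ') (hσ'1 : σ' ≤ 1)
    (hsum : σ + σ' = 1) (ht1 : 1 ≤ t₁) (ht12 : t₁ ≤ t₂)
    (x y : ℝ) :
    F ((σ * t₁ + σ' * t₂)⁻¹ * x, (σ * t₁ + σ' * t₂) * y) ≤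
      σ * F (t₁⁻¹ * x, t₁ * y) + σ' * F (t₂⁻¹ * x, t₂ * y) := by
  have ht1' : (0:ℝ) < t₁ := lt_of_lt_of_le one_pos ht1
  have ht2' : (0:ℝ) < t₂ := lt_of_lt_of_le ht1' ht12
  set t := σ * t₁ + σ' * t₂ with htdef
  have htpos : 0 < t := by nlinarith
  set s := σ / t₁ + σ' / t₂ with hsdef
  have hs0 : 0 ≤ s := by positivity
  have hinv : t⁻¹ ≤ s := by
    rw [hsdef, htdef, inv_le_iff_one_le_mul₀ (htdef ▸ htpos),
      div_add_div _ _ (ne_of_gt ht1') (ne_of_gt ht2'),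
      div_mul_eq_mul_div, le_div_iff₀ (by positivity)]
    have e : (σ^2 + 2*(σ*σ') + σ'^2) * (t₁*t₂) = t₁ * t₂ := by
      have h : σ^2 + 2*(σ*σ') + σ'^2 = 1 := by nlinarith
      rw [h, one_mul]
    linarith [e, mul_nonneg (mul_nonneg hσ0 hσ'0) (sq_nonneg (t₁ - t₂))]
  -- step 1: reduce to F (s * x, t * y)
  have step1 : F (t⁻¹ * x, t * y) ≤ F (s * x, t * y) := by
    rw [hsym (t⁻¹ * x) (t * y), hsym (s * x) (t * y)]
    have e1 : |t⁻¹ * x| = t⁻¹ * |x| := by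
      rw [abs_mul, abs_of_nonneg (le_of_lt (inv_pos.mpr htpos))]
    have e2 : |s * x| = s * |x| := by rw [abs_mul, abs_of_nonneg hs0]
    rw [e1, e2]
    exact mono_aux F hhom htri hsym _ _ _ (by positivity)
      (mul_le_mul_of_nonneg_right hinv (abs_nonneg x))
  -- step 2: convex combination
  have hdecomp : ((s * x, t * y) : ℝ × ℝ) =
      σ • ((t₁⁻¹ * x, t₁ * y) : ℝ × ℝ) + σ' • ((t₂⁻¹ * x, t₂ * y) : ℝ × ℝ) := by
    simp only [Prod.smul_mk, Prod.mk_add_mk, smul_eq_mul, Prod.mk.injEq]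
    constructor
    · rw [hsdef]; field_simp
    · rw [htdef]; ring
  calc F (t⁻¹ * x, t * y) ≤ F (s * x, t * y) := step1
    _ = F (σ • ((t₁⁻¹ * x, t₁ * y) : ℝ × ℝ) + σ' • ((t₂⁻¹ * x, t₂ * y) : ℝ × ℝ)) := by
        rw [← hdecomp]
    _ ≤ F (σ • ((t₁⁻¹ * x, t₁ * y) : ℝ × ℝ)) + F (σ' • ((t₂⁻¹ * x, t₂ * y) : ℝ × ℝ)) := htri _ _
    _ = σ * F (t₁⁻¹ * x, t₁ * y) + σ' * F (t₂⁻¹ * x, t₂ * y) := by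
        rw [hhom, hhom, abs_of_nonneg hσ0, abs_of_nonneg hσ'0]
end

section
/- For 0 ≤ u, v < 1, the quantity D_p(u,v) := (1/(1+uv))·((1−u^p v^p)²/((1−u^p)(1−v^p)))^{1/p} satisfies D_p(u,v) ≥ D_p((u+v)/2, (u+v)/2), with equality only when u = v. -/
noncomputable def Dp (p u v : ℝ) : ℝ :=
  (1 / (1 + u * v)) *
    ((1 - u ^ p * v ^ p) ^ 2 / ((1 - u ^ p) * (1 - v ^ p))) ^ (1 / p)

lemma Dp_key (p u v : ℝ) (hp : 1 ≤ p)
    (hu0 : 0 ≤ u) (hu1 : u < 1) (hv0 : 0 ≤ v) (hv1 : v < 1) (hne : u ≠ v) :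
    Dp p ((u + v) / 2) ((u + v) / 2) < Dp p u v := by
  have hp0 : (0:ℝ) < p := lt_of_lt_of_le one_pos hp
  set m : ℝ := (u + v) / 2 with hm
  have hm0 : 0 ≤ m := by positivity
  have hm1 : m < 1 := by rw [hm]; linarith
  set a : ℝ := u ^ p with ha
  set b : ℝ := v ^ p with hb
  set c : ℝ := m ^ p with hc
  have ha0 : 0 ≤ a := Real.rpow_nonneg hu0 p
  have hb0 : 0 ≤ b := Real.rpow_nonneg hv0 p
  have hc0 : 0 ≤ c := Real.rpow_nonneg hm0 p
  have ha1 : a < 1 := Real.rpow_lt_one hu0 hu1 hp0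
  have hb1 : b < 1 := Real.rpow_lt_one hv0 hv1 hp0
  have hc1 : c < 1 := Real.rpow_lt_one hm0 hm1 hp0
  -- convexity: c ≤ (a+b)/2
  have hconv : c ≤ (a + b) / 2 := by
    have h := (convexOn_rpow hp).2 (Set.mem_Ici.mpr hu0) (Set.mem_Ici.mpr hv0)
      (by norm_num : (0:ℝ) ≤ 1/2) (by norm_num : (0:ℝ) ≤ 1/2) (by norm_num)
    simp only [smul_eq_mul] at h
    calc c = ((1:ℝ)/2 * u + 1/2 * v) ^ p := by rw [hc, hm]; ring_nf
    _ ≤ 1/2 * u ^ p + 1/2 * v ^ p := h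
    _ = (a + b) / 2 := by rw [ha, hb]; ring
  -- key algebraic inequality
  have hden : 0 < (1 - a) * (1 - b) := by nlinarith
  have halg : (1 + c) ^ 2 ≤ (1 - a * b) ^ 2 / ((1 - a) * (1 - b)) := by
    rw [le_div_iff₀ hden]
    have hprod : 0 ≤ (((a + b)/2) ^ 2 - a * b) * (3 + (a + b) - a * b) := by
      have h1 : 0 ≤ ((a + b)/2) ^ 2 - a * b := by nlinarith [sq_nonneg (a - b)]
      have h2 : 0 ≤ 3 + (a + b) - a * b := by nlinarith
      exact mul_nonneg h1 h2
    have hstep : (1 + c) ^ 2 * ((1 - a) * (1 - b)) ≤ (1 + (a + b)/2) ^ 2 * ((1 - a) * (1 - b)) :=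
      mul_le_mul_of_nonneg_right (by nlinarith) hden.le
    nlinarith [hprod, hstep]
  -- rewrite Dp p m m
  have h1c : (1:ℝ) - c ≠ 0 := by linarith
  have hmm : Dp p m m = (1 / (1 + m * m)) * ((1 + c) ^ 2) ^ (1/p) := by
    unfold Dp
    rw [← hc]
    congr 2
    field_simp
    ring
  have huv : Dp p u v = (1 / (1 + u * v)) * ((1 - a * b) ^ 2 / ((1 - a) * (1 - b))) ^ (1/p) := by
    unfold Dp; rw [← ha, ← hb]
  rw [hmm, huv]
  have hx : ((1 + c) ^ 2) ^ (1/p) ≤ ((1 - a * b) ^ 2 / ((1 - a) * (1 - b))) ^ (1/p) :=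
    Real.rpow_le_rpow (by positivity) halg (by positivity)
  have hxpos : (0:ℝ) < ((1 + c) ^ 2) ^ (1/p) := Real.rpow_pos_of_pos (by positivity) _
  have huvm : u * v < m * m := by
    rw [hm]
    have h0 : u - v ≠ 0 := sub_ne_zero.mpr hne
    have h1 : 0 < (u - v) ^ 2 := by positivity
    nlinarith [h1]
  have hfrac : 1 / (1 + m * m) < 1 / (1 + u * v) := by
    apply one_div_lt_one_div_of_lt
    · positivity
    · linarith
  calc (1 / (1 + m * m)) * ((1 + c) ^ 2) ^ (1/p)
      < (1 / (1 + u * v)) * ((1 + c) ^ 2) ^ (1/p) :=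
        mul_lt_mul_of_pos_right hfrac hxpos
    _ ≤ (1 / (1 + u * v)) * ((1 - a * b) ^ 2 / ((1 - a) * (1 - b))) ^ (1/p) := by
        apply mul_le_mul_of_nonneg_left hx
        positivity

theorem stmt_7 (p u v : ℝ) (hp : 1 ≤ p)
    (hu0 : 0 ≤ u) (hu1 : u < 1) (hv0 : 0 ≤ v) (hv1 : v < 1) :
    Dp p ((u + v) / 2) ((u + v) / 2) ≤ Dp p u v ∧
      (Dp p u v = Dp p ((u + v) / 2) ((u + v) / 2) → u = v) := by
  by_cases hne : u = v
  · subst hne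
    have : (u + u) / 2 = u := by ring
    rw [this]
    exact ⟨le_refl _, fun _ => rfl⟩
  · have h := Dp_key p u v hp hu0 hu1 hv0 hv1 hne
    exact ⟨le_of_lt h, fun heq => absurd heq.symm (ne_of_lt h)⟩
end

section
/- Define d_p(x) = (1+x^p)^{2/p}/(1+x²) for x ∈ [0,1] and real p ≥ 1. If 1 ≤ p < 2 then d_p is strictly increasing on (0,1); if p = 2 then d_p(x) = 1 for all x; if p > 2 then d_p is strictly decreasing on (0,1). -/
noncomputable def dp (p x : ℝ) : ℝ := (1 + x ^ p) ^ (2 / p) / (1 + x ^ 2)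

noncomputable def gLog (p x : ℝ) : ℝ :=
  (2 / p) * Real.log (1 + x ^ p) - Real.log (1 + x ^ 2)

lemma gLog_deriv (p : ℝ) (hp : 1 ≤ p) {x : ℝ} (hx : x ∈ Set.Ioo (0:ℝ) 1) :
    HasDerivAt (gLog p)
      (2 * (x ^ (p-1) - x) / ((1 + x ^ p) * (1 + x ^ 2))) x := by
  have hp0 : (0:ℝ) < p := lt_of_lt_of_le one_pos hp
  have hx0 := hx.1
  have hxp : 0 < 1 + x ^ p := by
    have := Real.rpow_pos_of_pos hx0 p; linarith
  have hx2 : 0 < 1 + x ^ 2 := by positivity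
  have h1 : HasDerivAt (fun y : ℝ => 1 + y ^ p) (p * x ^ (p-1)) x :=
    (Real.hasDerivAt_rpow_const (Or.inl hx0.ne')).const_add 1
  have h2 : HasDerivAt (fun y : ℝ => (2/p) * Real.log (1 + y ^ p))
      ((2/p) * (p * x ^ (p-1) / (1 + x ^ p))) x := (h1.log hxp.ne').const_mul _
  have h3 : HasDerivAt (fun y : ℝ => 1 + y ^ 2) (2 * x) x := by
    have := (hasDerivAt_pow 2 x).const_add 1
    simpa using this
  have h4 : HasDerivAt (fun y : ℝ => Real.log (1 + y ^ 2)) (2 * x / (1 + x ^ 2)) x :=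
    h3.log hx2.ne'
  have h5 : x ^ (p-1) * x = x ^ p := by
    rw [← Real.rpow_add_one hx0.ne', sub_add_cancel]
  have h := h2.sub h4
  refine h.congr_deriv ?_; symm
  have hmul : x ^ (p-1) * x ^ 2 = x * x ^ p := by
    rw [sq, ← mul_assoc, h5]; ring
  have e1 : (2/p) * (p * x ^ (p-1) / (1 + x ^ p)) = 2 * x ^ (p-1) / (1 + x ^ p) := by
    field_simp
  rw [e1, div_sub_div _ _ hxp.ne' hx2.ne']
  congr 1

  linear_combination -2 * hmul

lemma dp_eq (p : ℝ) (hp : 0 < p) {x : ℝ} (hx : 0 < x) :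
    dp p x = Real.exp (gLog p x) := by
  have hxp : 0 < 1 + x ^ p := by
    have := Real.rpow_pos_of_pos hx p; linarith
  have hx2 : 0 < 1 + x ^ 2 := by positivity
  rw [dp, gLog, Real.exp_sub, Real.exp_log hx2, Real.rpow_def_of_pos hxp, mul_comm]

theorem stmt_10 (p : ℝ) (hp : 1 ≤ p) :
    ((p < 2) → StrictMonoOn (dp p) (Set.Ioo 0 1)) ∧
    (p = 2 → ∀ x ∈ Set.Icc (0 : ℝ) 1, dp p x = 1) ∧
    ((2 < p) → StrictAntiOn (dp p) (Set.Ioo 0 1)) := by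
  have hp0 : (0:ℝ) < p := lt_of_lt_of_le one_pos hp
  refine ⟨?_, ?_, ?_⟩
  · intro hlt
    have hmono : StrictMonoOn (gLog p) (Set.Ioo 0 1) := by
      apply strictMonoOn_of_deriv_pos (convex_Ioo 0 1)
      · intro x hx
        exact (gLog_deriv p hp hx).differentiableAt.continuousAt.continuousWithinAt
      · intro x hx
        rw [interior_Ioo] at hx
        rw [(gLog_deriv p hp hx).deriv]
        have hxp : 0 < 1 + x ^ p := by
          have := Real.rpow_pos_of_pos hx.1 p; linarith
        have hx2 : 0 < 1 + x ^ 2 := by positivity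
        have hlt2 : x < x ^ (p-1) := by
          have := Real.rpow_lt_rpow_of_exponent_gt hx.1 hx.2 (by linarith : p - 1 < 1)
          simpa using this
        exact div_pos (by linarith) (mul_pos hxp hx2)
    intro x hx y hy hxy
    rw [dp_eq p hp0 hx.1, dp_eq p hp0 hy.1]
    exact Real.exp_lt_exp.2 (hmono hx hy hxy)
  · intro hpe x hx
    subst hpe
    have hx2 : 0 < 1 + x ^ 2 := by positivity
    have : x ^ (2:ℝ) = x ^ 2 := by
      rw [← Real.rpow_natCast x 2]; norm_num
    rw [dp, this]
    norm_num
    exact hx2.ne'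
  · intro hlt
    have hanti : StrictAntiOn (gLog p) (Set.Ioo 0 1) := by
      apply strictAntiOn_of_deriv_neg (convex_Ioo 0 1)
      · intro x hx
        exact (gLog_deriv p hp hx).differentiableAt.continuousAt.continuousWithinAt
      · intro x hx
        rw [interior_Ioo] at hx
        rw [(gLog_deriv p hp hx).deriv]
        have hxp : 0 < 1 + x ^ p := by
          have := Real.rpow_pos_of_pos hx.1 p; linarith
        have hx2 : 0 < 1 + x ^ 2 := by positivity
        have hlt2 : x ^ (p-1) < x := by
          have := Real.rpow_lt_rpow_of_exponent_gt hx.1 hx.2 (by linarith : 1 < p - 1)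
          simpa using this
        exact div_neg_of_neg_of_pos (by linarith) (mul_pos hxp hx2)
    intro x hx y hy hxy
    rw [dp_eq p hp0 hx.1, dp_eq p hp0 hy.1]
    exact Real.exp_lt_exp.2 (hanti hx hy hxy)
end

section
/- For 1 ≤ p < 2, the minimum of D_p(u,v) := (1/(1+uv))·((1−u^p v^p)²/((1−u^p)(1−v^p)))^{1/p} over u, v ∈ [0,1) is 1, attained at u = v = 0. -/
theorem stmt_11 (p : ℝ) (hp1 : 1 ≤ p) (hp2 : p < 2) :
    (∀ u v : ℝ, 0 ≤ u → u < 1 → 0 ≤ v → v < 1 → 1 ≤ Dp p u v) ∧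
      Dp p 0 0 = 1 := by
  have hp0 : 0 < p := lt_of_lt_of_le one_pos hp1
  constructor
  · intro u v hu0 hu1 hv0 hv1
    set x := u ^ (p/2) with hxdef
    set y := v ^ (p/2) with hydef
    have hx0 : 0 ≤ x := Real.rpow_nonneg hu0 _
    have hy0 : 0 ≤ y := Real.rpow_nonneg hv0 _
    have hx1 : x < 1 := by
      rcases eq_or_lt_of_le hu0 with h | h
      · simp [hxdef, ← h, Real.zero_rpow (by positivity : (p/2 : ℝ) ≠ 0)]
      · exact Real.rpow_lt_one hu0 hu1 (by positivity)
    have hy1 : y < 1 := by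
      rcases eq_or_lt_of_le hv0 with h | h
      · simp [hydef, ← h, Real.zero_rpow (by positivity : (p/2 : ℝ) ≠ 0)]
      · exact Real.rpow_lt_one hv0 hv1 (by positivity)
    have hup : u ^ p = x ^ 2 := by
      rw [hxdef, ← Real.rpow_natCast (u ^ (p/2)) 2, ← Real.rpow_mul hu0]
      norm_num
    have hvp : v ^ p = y ^ 2 := by
      rw [hydef, ← Real.rpow_natCast (v ^ (p/2)) 2, ← Real.rpow_mul hv0]
      norm_num
    have hxy : x * y = (u * v) ^ (p/2 : ℝ) := (Real.mul_rpow hu0 hv0).symm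
    have huv : (x * y) ^ (2/p : ℝ) = u * v := by
      rw [hxy, ← Real.rpow_mul (by positivity)]
      rw [show (p/2) * (2/p) = 1 by field_simp, Real.rpow_one]
    have hA : (1 + x*y)^2 * ((1 - x^2) * (1 - y^2)) ≤ (1 - x^2*y^2)^2 := by
      nlinarith [sq_nonneg ((1 + x*y) * (x - y))]
    have hden : 0 < (1 - x^2) * (1 - y^2) :=
      mul_pos (by nlinarith) (by nlinarith)
    have hA' : (1 + x*y)^2 ≤ (1 - x^2*y^2)^2 / ((1 - x^2) * (1 - y^2)) :=
      (le_div_iff₀ hden).2 hA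
    have hbase : 1 + u * v ≤ ((1 - u ^ p * v ^ p) ^ 2 / ((1 - u ^ p) * (1 - v ^ p))) ^ (1/p : ℝ) := by
      rw [hup, hvp]
      have hr1 : (1:ℝ) ≤ 2/p := by rw [le_div_iff₀ hp0]; linarith
      have hs : u * v ≤ x * y := by
        rw [hxy]
        rcases eq_or_lt_of_le (mul_nonneg hu0 hv0) with h | h
        · rw [← h, Real.zero_rpow (by positivity : (p/2:ℝ) ≠ 0)]
        · calc u*v = (u*v) ^ (1:ℝ) := (Real.rpow_one _).symm
            _ ≤ (u*v) ^ (p/2 : ℝ) := Real.rpow_le_rpow_of_exponent_ge h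
                (mul_le_one₀ hu1.le hv0 hv1.le) (by linarith)
      have hstep1 : 1 + u * v ≤ (1 + x*y) ^ (2/p : ℝ) := by
        have hb := one_add_mul_self_le_rpow_one_add
          (by nlinarith [mul_nonneg hx0 hy0] : (-1:ℝ) ≤ x*y) hr1
        nlinarith [mul_nonneg hx0 hy0]
      have hstep2 : (1 + x*y) ^ (2/p : ℝ) = ((1 + x*y)^2) ^ (1/p : ℝ) := by
        rw [← Real.rpow_natCast (1 + x*y) 2, ← Real.rpow_mul (by positivity)]
        congr 1
        push_cast
        ring
      calc 1 + u * v ≤ (1 + x*y) ^ (2/p : ℝ) := hstep1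
        _ = ((1 + x*y)^2) ^ (1/p : ℝ) := hstep2
        _ ≤ ((1 - x^2*y^2)^2 / ((1 - x^2) * (1 - y^2))) ^ (1/p : ℝ) :=
            Real.rpow_le_rpow (by positivity) hA' (by positivity)
        _ = ((1 - x^2 * y^2) ^ 2 / ((1 - x^2) * (1 - y^2))) ^ (1/p : ℝ) := by ring_nf
    have huv0 : (0:ℝ) < 1 + u * v := by positivity
    rw [Dp, div_mul_eq_mul_div, one_mul, le_div_iff₀ huv0, one_mul]
    exact hbase
  · have h0 : (0:ℝ) ^ p = 0 := Real.zero_rpow (ne_of_gt hp0)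
    simp [Dp, h0]
end

section
/- Let L ⊂ ℝ² be a lattice of determinant 1 containing points P = (x,y) and P' = (x',y') that both lie on the boundary of a convex symmetric open set B_t (a stretched ball of a norm F satisfying F(x,y)=F(|x|,|y|)), are linearly independent over ℝ, and suppose L ∩ B_t = {0}. If L = L_α := (1,−α)ℤ + (0,1)ℤ with α irrational, then {P, P'} is a ℤ-basis for L. -/
lemma half_mod (a d : ℤ) (hd : d ≠ 0) : ∃ m r : ℤ, a = m * d + r ∧ 2 * |r| ≤ |d| := by
  rcases lt_or_gt_of_ne hd with h | h
  · obtain ⟨m, r, h1, h2⟩ : ∃ m r : ℤ, a = m * (-d) + r ∧ 2 * |r| ≤ |(-d)| := by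
      have hd' : 0 < -d := by omega
      have e := Int.mul_ediv_add_emod a (-d)
      have h0 : 0 ≤ a % (-d) := Int.emod_nonneg a (by omega)
      have h1 : a % (-d) < -d := Int.emod_lt_of_pos a hd'
      by_cases hc : 2 * (a % (-d)) ≤ -d
      · exact ⟨a / (-d), a % (-d), by linear_combination - e,
          by rw [abs_of_nonneg h0, abs_of_pos hd']; omega⟩
      · refine ⟨a / (-d) + 1, a % (-d) - (-d), by linear_combination - e, ?_⟩
        rw [abs_of_nonpos (by omega), abs_of_pos hd']; omega
    refine ⟨-m, r, by linear_combination h1, ?_⟩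
    rwa [abs_neg] at h2
  · have e := Int.mul_ediv_add_emod a d
    have h0 : 0 ≤ a % d := Int.emod_nonneg a (by omega)
    have h1 : a % d < d := Int.emod_lt_of_pos a h
    by_cases hc : 2 * (a % d) ≤ d
    · exact ⟨a / d, a % d, by linear_combination - e,
        by rw [abs_of_nonneg h0, abs_of_pos h]; omega⟩
    · refine ⟨a / d + 1, a % d - d, by linear_combination - e, ?_⟩
      rw [abs_of_nonpos (by omega), abs_of_pos h]; omega

lemma core (F : ℝ × ℝ → ℝ)
    (hnonneg : ∀ P, 0 ≤ F P)
    (hhom : ∀ (t : ℝ) (P : ℝ × ℝ), F (t • P) = |t| * F P)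
    (htri : ∀ P Q, F (P + Q) ≤ F P + F Q)
    (A B Z : ℝ × ℝ) (l m : ℝ)
    (hA : F A ≤ 1) (hB : F B ≤ 1)
    (hW : 1 ≤ F ((1/2 : ℝ) • (A + B)))
    (hl : 0 ≤ l) (hm : 0 ≤ m)
    (hZ : Z = l • A + m • B) (hFZ : F Z ≤ 1) : l + m ≤ 1 := by
  by_contra hcon
  push_neg at hcon
  set M : ℝ := max l m with hM
  have hM0 : 0 < M := by
    have h1 : l ≤ M := le_max_left _ _
    have h2 : m ≤ M := le_max_right _ _
    nlinarith
  set γ : ℝ := 1 / (2 * M) with hγ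
  have hγ0 : 0 < γ := by positivity
  have hγl : γ * l ≤ 1/2 := by
    rw [hγ, div_mul_eq_mul_div, div_le_iff₀ (by positivity)]
    have : l ≤ M := le_max_left _ _
    nlinarith
  have hγm : γ * m ≤ 1/2 := by
    rw [hγ, div_mul_eq_mul_div, div_le_iff₀ (by positivity)]
    have : m ≤ M := le_max_right _ _
    nlinarith
  have key : (1/2 : ℝ) • (A + B) = (1/2 - γ*l) • A + ((1/2 - γ*m) • B + γ • Z) := by
    rw [hZ]; module
  have hb1 : F ((1/2 - γ*l) • A) = (1/2 - γ*l) * F A := by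
    rw [hhom, abs_of_nonneg (by linarith)]
  have hb2 : F ((1/2 - γ*m) • B) = (1/2 - γ*m) * F B := by
    rw [hhom, abs_of_nonneg (by linarith)]
  have hb3 : F (γ • Z) = γ * F Z := by rw [hhom, abs_of_nonneg hγ0.le]
  have chain : F ((1/2 : ℝ) • (A + B)) ≤ (1/2 - γ*l) * F A + ((1/2 - γ*m) * F B + γ * F Z) := by
    rw [key]
    calc F ((1/2 - γ*l) • A + ((1/2 - γ*m) • B + γ • Z))
        ≤ F ((1/2 - γ*l) • A) + F ((1/2 - γ*m) • B + γ • Z) := htri _ _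
      _ ≤ F ((1/2 - γ*l) • A) + (F ((1/2 - γ*m) • B) + F (γ • Z)) := by
          have := htri ((1/2 - γ*m) • B) (γ • Z); linarith
      _ = _ := by rw [hb1, hb2, hb3]
  nlinarith [chain, hW, mul_le_mul_of_nonneg_left hA (show (0:ℝ) ≤ 1/2 - γ*l by linarith),
    mul_le_mul_of_nonneg_left hB (show (0:ℝ) ≤ 1/2 - γ*m by linarith),
    mul_le_mul_of_nonneg_left hFZ hγ0.le, mul_pos hγ0 (show (0:ℝ) < l + m - 1 by linarith)]

lemma box (F : ℝ × ℝ → ℝ)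
    (hnonneg : ∀ P, 0 ≤ F P)
    (hhom : ∀ (t : ℝ) (P : ℝ × ℝ), F (t • P) = |t| * F P)
    (htri : ∀ P Q, F (P + Q) ≤ F P + F Q)
    (A B Z : ℝ × ℝ) (l m : ℝ)
    (hA : F A ≤ 1) (hB : F B ≤ 1)
    (hW1 : 1 ≤ F ((1/2 : ℝ) • (A + B)))
    (hW2 : 1 ≤ F ((1/2 : ℝ) • (A - B)))
    (hZ : Z = l • A + m • B) (hFZ : F Z ≤ 1) : |l| + |m| ≤ 1 := by
  have hFneg : ∀ X : ℝ × ℝ, F (-X) = F X := by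
    intro X
    have := hhom (-1) X
    simpa using this
  have hnA : F (-A) ≤ 1 := by rwa [hFneg]
  have hnB : F (-B) ≤ 1 := by rwa [hFneg]
  rcases le_or_gt 0 l with hl | hl <;> rcases le_or_gt 0 m with hm | hm
  · rw [abs_of_nonneg hl, abs_of_nonneg hm]
    exact core F hnonneg hhom htri A B Z l m hA hB hW1 hl hm hZ hFZ
  · rw [abs_of_nonneg hl, abs_of_neg hm]
    refine core F hnonneg hhom htri A (-B) Z l (-m) hA hnB ?_ hl (by linarith) ?_ hFZ
    · have e : (1/2 : ℝ) • (A + -B) = (1/2 : ℝ) • (A - B) := by module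
      rw [e]; exact hW2
    · rw [hZ]; module
  · rw [abs_of_neg hl, abs_of_nonneg hm]
    refine core F hnonneg hhom htri (-A) B Z (-l) m hnA hB ?_ (by linarith) hm ?_ hFZ
    · have e : (1/2 : ℝ) • (-A + B) = -((1/2 : ℝ) • (A - B)) := by module
      rw [e, hFneg]; exact hW2
    · rw [hZ]; module
  · rw [abs_of_neg hl, abs_of_neg hm]
    refine core F hnonneg hhom htri (-A) (-B) Z (-l) (-m) hnA hnB ?_ (by linarith) (by linarith) ?_ hFZ
    · have e : (1/2 : ℝ) • (-A + -B) = -((1/2 : ℝ) • (A + B)) := by module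
      rw [e, hFneg]; exact hW1
    · rw [hZ]; module

set_option maxHeartbeats 1000000 in
lemma stmt13_key (F : ℝ × ℝ → ℝ)
    (hnonneg : ∀ P, 0 ≤ F P)
    (hzero : ∀ P, F P = 0 ↔ P = 0)
    (hhom : ∀ (t : ℝ) (P), F (t • P) = |t| * F P)
    (htri : ∀ P Q, F (P + Q) ≤ F P + F Q)
    (hsym : ∀ x y : ℝ, F (x, y) = F (|x|, |y|))
    (t : ℝ) (ht : 0 < t)
    (α : ℝ) (hα : Irrational α)
    (L : Set (ℝ × ℝ))
    (hL : L = {v : ℝ × ℝ | ∃ p q : ℤ, v = ((q : ℝ), (p : ℝ) - α * q)})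
    (p1 q1 p2 q2 : ℤ)
    (hPbd : F ((q1 : ℝ) / t, t * ((p1 : ℝ) - α * q1)) = 1)
    (hP'bd : F ((q2 : ℝ) / t, t * ((p2 : ℝ) - α * q2)) = 1)
    (hadm : ∀ v ∈ L, F (v.1 / t, t * v.2) < 1 → v = 0)
    (D : ℤ) (hDdef : D = q1 * p2 - p1 * q2)
    (hD0 : D ≠ 0) :
    D = 1 ∨ D = -1 := by
  set a1 : ℝ := (q1 : ℝ) / t with ha1
  set a2 : ℝ := t * ((p1 : ℝ) - α * q1) with ha2
  set b1 : ℝ := (q2 : ℝ) / t with hb1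
  set b2 : ℝ := t * ((p2 : ℝ) - α * q2) with hb2
  have ht0 : t ≠ 0 := ne_of_gt ht
  by_contra hcon
  push_neg at hcon
  obtain ⟨hcon1, hcon2⟩ := hcon
  -- nonrepresentable point exists
  have hall : ¬ (∀ q p : ℤ, ∃ m n : ℤ, m * q1 + n * q2 = q ∧ m * p1 + n * p2 = p) := by
    intro hrep
    obtain ⟨m1, n1, h11, h12⟩ := hrep 1 0
    obtain ⟨m2, n2, h21, h22⟩ := hrep 0 1
    have key : (m1*n2 - m2*n1) * D
        = (m1*q1+n1*q2)*(m2*p1+n2*p2) - (m2*q1+n2*q2)*(m1*p1+n1*p2) := by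
      rw [hDdef]; ring
    rw [h11, h12, h21, h22] at key
    simp at key
    have key' : D * (m1*n2 - m2*n1) = 1 := by rw [mul_comm]; exact key
    rcases Int.isUnit_iff.mp (IsUnit.of_mul_eq_one _ key') with h | h
    exacts [hcon1 h, hcon2 h]
  push_neg at hall
  obtain ⟨q0, p0, h0⟩ := hall
  set lam : ℤ := q0 * p2 - p0 * q2 with hlam
  set mu : ℤ := q1 * p0 - p1 * q0 with hmu
  have idq : lam * q1 + mu * q2 = q0 * D := by rw [hlam, hmu, hDdef]; ring
  have idp : lam * p1 + mu * p2 = p0 * D := by rw [hlam, hmu, hDdef]; ring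
  obtain ⟨m, rl, hm1, hm2⟩ := half_mod lam D hD0
  obtain ⟨n, rm, hn1, hn2⟩ := half_mod mu D hD0
  have hnz : ¬ (rl = 0 ∧ rm = 0) := by
    rintro ⟨h1, h2⟩
    rw [h1] at hm1
    rw [h2] at hn1
    have eqq : m * q1 + n * q2 = q0 :=
      mul_left_cancel₀ hD0 (by linear_combination idq - q1 * hm1 - q2 * hn1)
    have eqp : m * p1 + n * p2 = p0 :=
      mul_left_cancel₀ hD0 (by linear_combination idp - p1 * hm1 - p2 * hn1)
    exact h0 m n eqq eqp
  set qv : ℤ := q0 - (m * q1 + n * q2) with hqv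
  set pv : ℤ := p0 - (m * p1 + n * p2) with hpv
  have idqv : D * qv = rl * q1 + rm * q2 := by
    rw [hqv]; linear_combination -idq + q1 * hm1 + q2 * hn1
  have idpv : D * pv = rl * p1 + rm * p2 := by
    rw [hpv]; linear_combination -idp + p1 * hm1 + p2 * hn1
  -- the lattice point V
  have hVL : (((qv : ℝ), (pv : ℝ) - α * qv) : ℝ × ℝ) ∈ L := by
    rw [hL]; exact ⟨pv, qv, rfl⟩
  have hV0 : (((qv : ℝ), (pv : ℝ) - α * qv) : ℝ × ℝ) ≠ 0 := by
    intro h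
    have h1 : (qv : ℝ) = 0 := congrArg Prod.fst h
    have hq' : qv = 0 := by exact_mod_cast h1
    have h2 : (pv : ℝ) - α * qv = 0 := congrArg Prod.snd h
    rw [hq'] at h2
    have hp' : pv = 0 := by
      have : (pv : ℝ) = 0 := by push_cast at h2; linarith
      exact_mod_cast this
    rw [hq'] at idqv
    rw [hp'] at idpv
    have e1 : rl * D = 0 := by linear_combination -p2 * idqv + q2 * idpv + rl * hDdef
    have e2 : rm * D = 0 := by linear_combination -q1 * idpv + p1 * idqv + rm * hDdef
    rcases mul_eq_zero.mp e1 with h | h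
    · rcases mul_eq_zero.mp e2 with h' | h'
      · exact hnz ⟨h, h'⟩
      · exact hD0 h'
    · exact hD0 h
  have hFV : 1 ≤ F ((qv : ℝ) / t, t * ((pv : ℝ) - α * qv)) := by
    by_contra hlt
    push_neg at hlt
    exact hV0 (hadm _ hVL hlt)
  -- real coefficients
  have hDR : (D : ℝ) ≠ 0 := Int.cast_ne_zero.mpr hD0
  set l : ℝ := (rl : ℝ) / D with hldef
  set mm : ℝ := (rm : ℝ) / D with hmmdef
  have idqvR : (D : ℝ) * qv = rl * q1 + rm * q2 := by exact_mod_cast congrArg (fun z : ℤ => (z : ℝ)) idqv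
  have idpvR : (D : ℝ) * pv = rl * p1 + rm * p2 := by exact_mod_cast congrArg (fun z : ℤ => (z : ℝ)) idpv
  have hφV : (((qv : ℝ) / t, t * ((pv : ℝ) - α * qv)) : ℝ × ℝ)
      = l • ((a1, a2) : ℝ × ℝ) + mm • ((b1, b2) : ℝ × ℝ) := by
    have e1 : (l • ((a1, a2) : ℝ × ℝ) + mm • ((b1, b2) : ℝ × ℝ))
        = (l * a1 + mm * b1, l * a2 + mm * b2) := by
      ext <;> simp [smul_eq_mul]
    rw [e1]
    have hq' : (qv : ℝ) = l * q1 + mm * q2 := by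
      rw [hldef, hmmdef, div_mul_eq_mul_div, div_mul_eq_mul_div, ← add_div, ← idqvR,
        mul_comm, mul_div_assoc, div_self hDR, mul_one]
    have hp' : (pv : ℝ) = l * p1 + mm * p2 := by
      rw [hldef, hmmdef, div_mul_eq_mul_div, div_mul_eq_mul_div, ← add_div, ← idpvR,
        mul_comm, mul_div_assoc, div_self hDR, mul_one]
    have c1 : (qv : ℝ) / t = l * a1 + mm * b1 := by rw [ha1, hb1, hq']; ring
    have c2 : t * ((pv : ℝ) - α * qv) = l * a2 + mm * b2 := by
      rw [ha2, hb2, hq', hp']; ring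
    rw [← c1, ← c2]
  have hFle : F ((qv : ℝ) / t, t * ((pv : ℝ) - α * qv)) ≤ |l| + |mm| := by
    rw [hφV]
    calc F (l • ((a1, a2) : ℝ × ℝ) + mm • ((b1, b2) : ℝ × ℝ))
        ≤ F (l • ((a1, a2) : ℝ × ℝ)) + F (mm • ((b1, b2) : ℝ × ℝ)) := htri _ _
      _ = |l| * F (a1, a2) + |mm| * F (b1, b2) := by rw [hhom, hhom]
      _ = |l| + |mm| := by rw [hPbd, hP'bd]; ring
  have habl : |l| ≤ 1/2 := by
    rw [hldef, abs_div]
    rw [div_le_iff₀ (abs_pos.mpr hDR)]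
    have : ((2 * |rl| : ℤ) : ℝ) ≤ ((|D| : ℤ) : ℝ) := by exact_mod_cast hm2
    push_cast at this
    linarith
  have habm : |mm| ≤ 1/2 := by
    rw [hmmdef, abs_div]
    rw [div_le_iff₀ (abs_pos.mpr hDR)]
    have : ((2 * |rm| : ℤ) : ℝ) ≤ ((|D| : ℤ) : ℝ) := by exact_mod_cast hn2
    push_cast at this
    linarith
  have heql : |l| = 1/2 := by linarith [hFV, hFle]
  have heqm : |mm| = 1/2 := by linarith [hFV, hFle]
  -- back to integers : |2 rl| = |D|, |2 rm| = |D|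
  have hrlD : 2 * |rl| = |D| := by
    have : |(rl : ℝ)| / |(D : ℝ)| = 1/2 := by rw [← abs_div]; exact heql
    have h2 : 2 * |(rl : ℝ)| = |(D : ℝ)| := by
      field_simp at this
      linarith
    exact_mod_cast (by push_cast [← Int.cast_abs] at h2 ⊢; exact h2 : (2 * |rl| : ℝ) = ((|D| : ℤ) : ℝ))
  have hrmD : 2 * |rm| = |D| := by
    have : |(rm : ℝ)| / |(D : ℝ)| = 1/2 := by rw [← abs_div]; exact heqm
    have h2 : 2 * |(rm : ℝ)| = |(D : ℝ)| := by
      field_simp at this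
      linarith
    exact_mod_cast (by push_cast [← Int.cast_abs] at h2 ⊢; exact h2 : (2 * |rm| : ℝ) = ((|D| : ℤ) : ℝ))
  have habs1 : 2 * rl = D ∨ 2 * rl = -D := by
    refine abs_eq_abs.mp ?_
    rw [abs_mul, abs_two]
    omega
  have habs2 : 2 * rm = D ∨ 2 * rm = -D := by
    refine abs_eq_abs.mp ?_
    rw [abs_mul, abs_two]
    omega
  -- parity
  have hpar : (2 : ℤ) ∣ (q1 + q2) ∧ (2 : ℤ) ∣ (p1 + p2) := by
    rcases habs1 with h1 | h1 <;> rcases habs2 with h2 | h2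
    · have eq : D * (2 * qv) = D * (q1 + q2) := by linear_combination 2 * idqv + q1 * h1 + q2 * h2
      have ep : D * (2 * pv) = D * (p1 + p2) := by linear_combination 2 * idpv + p1 * h1 + p2 * h2
      have e1 := mul_left_cancel₀ hD0 eq
      have e2 := mul_left_cancel₀ hD0 ep
      exact ⟨by omega, by omega⟩
    · have eq : D * (2 * qv) = D * (q1 - q2) := by linear_combination 2 * idqv + q1 * h1 + q2 * h2
      have ep : D * (2 * pv) = D * (p1 - p2) := by linear_combination 2 * idpv + p1 * h1 + p2 * h2
      have e1 := mul_left_cancel₀ hD0 eq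
      have e2 := mul_left_cancel₀ hD0 ep
      exact ⟨by omega, by omega⟩
    · have eq : D * (2 * qv) = D * (- q1 + q2) := by linear_combination 2 * idqv + q1 * h1 + q2 * h2
      have ep : D * (2 * pv) = D * (- p1 + p2) := by linear_combination 2 * idpv + p1 * h1 + p2 * h2
      have e1 := mul_left_cancel₀ hD0 eq
      have e2 := mul_left_cancel₀ hD0 ep
      exact ⟨by omega, by omega⟩
    · have eq : D * (2 * qv) = D * (- q1 - q2) := by linear_combination 2 * idqv + q1 * h1 + q2 * h2
      have ep : D * (2 * pv) = D * (- p1 - p2) := by linear_combination 2 * idpv + p1 * h1 + p2 * h2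
      have e1 := mul_left_cancel₀ hD0 eq
      have e2 := mul_left_cancel₀ hD0 ep
      exact ⟨by omega, by omega⟩
  obtain ⟨c1, hc1e⟩ := hpar.1
  obtain ⟨c3, hc3e⟩ := hpar.2
  -- w1 = (P+P')/2 in L, nonzero
  have hw1L : (((c1 : ℝ), (c3 : ℝ) - α * c1) : ℝ × ℝ) ∈ L := by rw [hL]; exact ⟨c3, c1, rfl⟩
  have hw10 : (((c1 : ℝ), (c3 : ℝ) - α * c1) : ℝ × ℝ) ≠ 0 := by
    intro h
    have h1 : (c1 : ℝ) = 0 := congrArg Prod.fst h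
    have hc1z : c1 = 0 := by exact_mod_cast h1
    have h2 : (c3 : ℝ) - α * c1 = 0 := congrArg Prod.snd h
    rw [hc1z] at h2
    have hc3z : c3 = 0 := by
      have : (c3 : ℝ) = 0 := by push_cast at h2; linarith
      exact_mod_cast this
    apply hD0
    have hq2e : q2 = -q1 := by omega
    have hp2e : p2 = -p1 := by omega
    rw [hDdef, hq2e, hp2e]; ring
  have hFw1 : 1 ≤ F ((c1 : ℝ) / t, t * ((c3 : ℝ) - α * c1)) := by
    by_contra hlt
    push_neg at hlt
    exact hw10 (hadm _ hw1L hlt)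
  have hc1R : (q1 : ℝ) + q2 = 2 * c1 := by exact_mod_cast congrArg (fun z : ℤ => (z : ℝ)) hc1e
  have hc3R : (p1 : ℝ) + p2 = 2 * c3 := by exact_mod_cast congrArg (fun z : ℤ => (z : ℝ)) hc3e
  have hW1 : 1 ≤ F ((1/2 : ℝ) • (((a1, a2) : ℝ × ℝ) + ((b1, b2) : ℝ × ℝ))) := by
    have e : ((1/2 : ℝ) • (((a1, a2) : ℝ × ℝ) + ((b1, b2) : ℝ × ℝ)))
        = (((c1 : ℝ) / t, t * ((c3 : ℝ) - α * c1)) : ℝ × ℝ) := by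
      ext
      · show (1/2 : ℝ) * (a1 + b1) = (c1 : ℝ) / t
        rw [ha1, hb1, ← add_div, hc1R]
        ring
      · show (1/2 : ℝ) * (a2 + b2) = t * ((c3 : ℝ) - α * c1)
        rw [ha2, hb2]
        linear_combination (t/2) * hc3R - (t*α/2) * hc1R
    rw [e]
    exact hFw1
  -- w2 = (P-P')/2
  have hw2L : (((c1 : ℝ) - q2, ((c3 : ℝ) - p2) - α * ((c1 : ℝ) - q2)) : ℝ × ℝ) ∈ L := by
    rw [hL]
    refine ⟨c3 - p2, c1 - q2, ?_⟩
    push_cast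
    rfl
  have hw20 : (((c1 : ℝ) - q2, ((c3 : ℝ) - p2) - α * ((c1 : ℝ) - q2)) : ℝ × ℝ) ≠ 0 := by
    intro h
    have h1 : (c1 : ℝ) - q2 = 0 := congrArg Prod.fst h
    have hc1z : c1 - q2 = 0 := by exact_mod_cast (by push_cast; linarith : ((c1 - q2 : ℤ) : ℝ) = 0)
    have h2 : ((c3 : ℝ) - p2) - α * ((c1 : ℝ) - q2) = 0 := congrArg Prod.snd h
    rw [h1] at h2
    have hc3z : c3 - p2 = 0 := by
      have : (c3 : ℝ) - p2 = 0 := by push_cast at h2 ⊢; linarith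
      exact_mod_cast (by push_cast; linarith : ((c3 - p2 : ℤ) : ℝ) = 0)
    apply hD0
    have hq2e : q2 = q1 := by omega
    have hp2e : p2 = p1 := by omega
    rw [hDdef, hq2e, hp2e]; ring
  have hFw2 : 1 ≤ F (((c1 : ℝ) - q2) / t, t * (((c3 : ℝ) - p2) - α * ((c1 : ℝ) - q2))) := by
    by_contra hlt
    push_neg at hlt
    exact hw20 (hadm _ hw2L hlt)
  have hW2 : 1 ≤ F ((1/2 : ℝ) • (((a1, a2) : ℝ × ℝ) - ((b1, b2) : ℝ × ℝ))) := by
    have e : ((1/2 : ℝ) • (((a1, a2) : ℝ × ℝ) - ((b1, b2) : ℝ × ℝ)))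
        = ((((c1 : ℝ) - q2) / t, t * (((c3 : ℝ) - p2) - α * ((c1 : ℝ) - q2))) : ℝ × ℝ) := by
      ext
      · show (1/2 : ℝ) * (a1 - b1) = ((c1 : ℝ) - q2) / t
        rw [ha1, hb1, div_sub_div_same]
        have e2 : (q1 : ℝ) - q2 = 2 * ((c1 : ℝ) - q2) := by linarith [hc1R]
        rw [e2]
        ring
      · show (1/2 : ℝ) * (a2 - b2) = t * (((c3 : ℝ) - p2) - α * ((c1 : ℝ) - q2))
        rw [ha2, hb2]
        linear_combination (t/2) * hc3R - (t*α/2) * hc1R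
    rw [e]
    exact hFw2
  -- now the geometry of the symmetric norm
  have hF0 : F 0 = 0 := (hzero 0).mpr rfl
  have hx1 : (p1 : ℝ) - α * q1 ≠ 0 := by
    intro h
    by_cases hq : q1 = 0
    · have hp : p1 = 0 := by
        rw [hq] at h
        push_cast at h
        exact_mod_cast (by linarith : (p1 : ℝ) = 0)
      have hA0 : ((a1, a2) : ℝ × ℝ) = 0 := by
        have e1 : a1 = 0 := by rw [ha1, hq]; simp
        have e2 : a2 = 0 := by rw [ha2, h, mul_zero]
        rw [e1, e2]; rfl
      rw [hA0, hF0] at hPbd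
      norm_num at hPbd
    · refine ((irrational_iff_ne_rational α).mp hα p1 q1 hq) ?_
      rw [eq_div_iff (by exact_mod_cast hq : (q1 : ℝ) ≠ 0)]
      linarith [h]
  have hx2 : (p2 : ℝ) - α * q2 ≠ 0 := by
    intro h
    by_cases hq : q2 = 0
    · have hp : p2 = 0 := by
        rw [hq] at h
        push_cast at h
        exact_mod_cast (by linarith : (p2 : ℝ) = 0)
      have hB0 : ((b1, b2) : ℝ × ℝ) = 0 := by
        have e1 : b1 = 0 := by rw [hb1, hq]; simp
        have e2 : b2 = 0 := by rw [hb2, h, mul_zero]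
        rw [e1, e2]; rfl
      rw [hB0, hF0] at hP'bd
      norm_num at hP'bd
    · refine ((irrational_iff_ne_rational α).mp hα p2 q2 hq) ?_
      rw [eq_div_iff (by exact_mod_cast hq : (q2 : ℝ) ≠ 0)]
      linarith [h]
  have ha2ne : a2 ≠ 0 := by rw [ha2]; exact mul_ne_zero ht0 hx1
  have hb2ne : b2 ≠ 0 := by rw [hb2]; exact mul_ne_zero ht0 hx2
  have hDr : a1 * b2 - a2 * b1 = (D : ℝ) := by
    rw [ha1, ha2, hb1, hb2, hDdef]
    push_cast
    field_simp
    ring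
  have hDdne : a1 * b2 - a2 * b1 ≠ 0 := by rw [hDr]; exact hDR
  have hDdpos : 0 < |a1 * b2 - a2 * b1| := abs_pos.mpr hDdne
  have hsymA : F (a1, -a2) ≤ 1 := by
    rw [show F (a1, -a2) = F (a1, a2) from by rw [hsym a1 (-a2), abs_neg, ← hsym a1 a2], hPbd]
  have hsymB : F (b1, -b2) ≤ 1 := by
    rw [show F (b1, -b2) = F (b1, b2) from by rw [hsym b1 (-b2), abs_neg, ← hsym b1 b2], hP'bd]
  have hZ1 : ((a1, -a2) : ℝ × ℝ)
      = ((a1*b2 + a2*b1)/(a1*b2 - a2*b1)) • ((a1, a2) : ℝ × ℝ)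
        + ((-(2*a1*a2))/(a1*b2 - a2*b1)) • ((b1, b2) : ℝ × ℝ) := by
    have e1 : (((a1*b2 + a2*b1)/(a1*b2 - a2*b1)) • ((a1, a2) : ℝ × ℝ)
        + ((-(2*a1*a2))/(a1*b2 - a2*b1)) • ((b1, b2) : ℝ × ℝ))
        = ((a1*b2 + a2*b1)/(a1*b2 - a2*b1) * a1 + (-(2*a1*a2))/(a1*b2 - a2*b1) * b1,
           (a1*b2 + a2*b1)/(a1*b2 - a2*b1) * a2 + (-(2*a1*a2))/(a1*b2 - a2*b1) * b2) := by
      ext <;> simp [smul_eq_mul]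
    rw [e1]
    ext
    · show a1 = _
      field_simp
      ring
    · show -a2 = _
      field_simp
      ring
  have hZ2 : ((b1, -b2) : ℝ × ℝ)
      = ((2*b1*b2)/(a1*b2 - a2*b1)) • ((a1, a2) : ℝ × ℝ)
        + ((-(a1*b2 + a2*b1))/(a1*b2 - a2*b1)) • ((b1, b2) : ℝ × ℝ) := by
    have e1 : (((2*b1*b2)/(a1*b2 - a2*b1)) • ((a1, a2) : ℝ × ℝ)
        + ((-(a1*b2 + a2*b1))/(a1*b2 - a2*b1)) • ((b1, b2) : ℝ × ℝ))
        = ((2*b1*b2)/(a1*b2 - a2*b1) * a1 + (-(a1*b2 + a2*b1))/(a1*b2 - a2*b1) * b1,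
           (2*b1*b2)/(a1*b2 - a2*b1) * a2 + (-(a1*b2 + a2*b1))/(a1*b2 - a2*b1) * b2) := by
      ext <;> simp [smul_eq_mul]
    rw [e1]
    ext
    · show b1 = (2*b1*b2)/(a1*b2 - a2*b1) * a1 + (-(a1*b2 + a2*b1))/(a1*b2 - a2*b1) * b1
      have hinv : (a1*b2 - a2*b1) * (a1*b2 - a2*b1)⁻¹ = 1 := mul_inv_cancel₀ hDdne
      linear_combination (-b1) * hinv
    · show -b2 = (2*b1*b2)/(a1*b2 - a2*b1) * a2 + (-(a1*b2 + a2*b1))/(a1*b2 - a2*b1) * b2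
      have hinv : (a1*b2 - a2*b1) * (a1*b2 - a2*b1)⁻¹ = 1 := mul_inv_cancel₀ hDdne
      linear_combination b2 * hinv
  have ib1 := box F hnonneg hhom htri (a1, a2) (b1, b2) (a1, -a2)
    ((a1*b2 + a2*b1)/(a1*b2 - a2*b1)) ((-(2*a1*a2))/(a1*b2 - a2*b1))
    (le_of_eq hPbd) (le_of_eq hP'bd) hW1 hW2 hZ1 hsymA
  have ib2 := box F hnonneg hhom htri (a1, a2) (b1, b2) (b1, -b2)
    ((2*b1*b2)/(a1*b2 - a2*b1)) ((-(a1*b2 + a2*b1))/(a1*b2 - a2*b1))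
    (le_of_eq hPbd) (le_of_eq hP'bd) hW1 hW2 hZ2 hsymB
  have in1 : |a1*b2 + a2*b1| + |2*a1*a2| ≤ |a1*b2 - a2*b1| := by
    rw [abs_div, abs_div, abs_neg, ← add_div, div_le_one hDdpos] at ib1
    exact ib1
  have in2 : |2*b1*b2| + |a1*b2 + a2*b1| ≤ |a1*b2 - a2*b1| := by
    rw [abs_div, abs_div, abs_neg, ← add_div, div_le_one hDdpos] at ib2
    exact ib2
  have tri_a : |a1*b2 - a2*b1| ≤ |a1*b2 + a2*b1| + |2*(a2*b1)| := by
    calc |a1*b2 - a2*b1| = |(a1*b2 + a2*b1) + (-(2*(a2*b1)))| := by congr 1; ring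
      _ ≤ |a1*b2 + a2*b1| + |(-(2*(a2*b1)))| := abs_add_le _ _
      _ = |a1*b2 + a2*b1| + |2*(a2*b1)| := by rw [abs_neg]
  have tri_b : |a1*b2 - a2*b1| ≤ |a1*b2 + a2*b1| + |2*(a1*b2)| := by
    calc |a1*b2 - a2*b1| = |(2*(a1*b2)) + (-(a1*b2 + a2*b1))| := by congr 1; ring
      _ ≤ |2*(a1*b2)| + |(-(a1*b2 + a2*b1))| := abs_add_le _ _
      _ = |a1*b2 + a2*b1| + |2*(a1*b2)| := by rw [abs_neg]; ring
  by_cases hA1 : a1 = 0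
  · -- then b1 = 0 and determinant vanishes
    have e1 : |a1*b2 + a2*b1| = |a2*b1| := by rw [hA1]; congr 1; ring
    have e2 : |a1*b2 - a2*b1| = |a2*b1| := by
      rw [hA1, show (0:ℝ)*b2 - a2*b1 = -(a2*b1) from by ring, abs_neg]
    have hble : |2*b1*b2| ≤ 0 := by rw [e1, e2] at in2; linarith
    have hb0 : 2*b1*b2 = 0 := abs_nonpos_iff.mp hble
    have hb1z : b1 = 0 := by
      rcases mul_eq_zero.mp hb0 with h | h
      · rcases mul_eq_zero.mp h with h' | h'
        · norm_num at h'
        · exact h'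
      · exact absurd h hb2ne
    exact hDdne (by rw [hA1, hb1z]; ring)
  · by_cases hB1 : b1 = 0
    · have e1 : |a1*b2 + a2*b1| = |a1*b2| := by rw [hB1]; congr 1; ring
      have e2 : |a1*b2 - a2*b1| = |a1*b2| := by rw [hB1]; congr 1; ring
      have hale : |2*a1*a2| ≤ 0 := by rw [e1, e2] at in1; linarith
      have ha0 : 2*a1*a2 = 0 := abs_nonpos_iff.mp hale
      have ha1z : a1 = 0 := by
        rcases mul_eq_zero.mp ha0 with h | h
        · rcases mul_eq_zero.mp h with h' | h'
          · norm_num at h'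
          · exact h'
        · exact absurd h ha2ne
      exact hA1 ha1z
    · -- main case: |a2| = |b2|
      have k1 : |2*a1*a2| ≤ |2*(a1*b2)| := by linarith [in1, tri_b]
      have k2 : |2*b1*b2| ≤ |2*(a2*b1)| := by linarith [in2, tri_a]
      have k1' : 2 * |a1| * |a2| ≤ 2 * (|a1| * |b2|) := by
        have h2 : |2*a1*a2| = 2 * |a1| * |a2| := by rw [abs_mul, abs_mul, abs_two]
        have h3 : |2*(a1*b2)| = 2 * (|a1| * |b2|) := by rw [abs_mul, abs_mul, abs_two]
        rw [h2, h3] at k1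
        exact k1
      have k2' : 2 * |b1| * |b2| ≤ 2 * (|a2| * |b1|) := by
        have h2 : |2*b1*b2| = 2 * |b1| * |b2| := by rw [abs_mul, abs_mul, abs_two]
        have h3 : |2*(a2*b1)| = 2 * (|a2| * |b1|) := by rw [abs_mul, abs_mul, abs_two]
        rw [h2, h3] at k2
        exact k2
      have habs_a2b2 : |a2| ≤ |b2| := by
        nlinarith [k1', abs_pos.mpr hA1, abs_nonneg a2, abs_nonneg b2]
      have habs_b2a2 : |b2| ≤ |a2| := by
        nlinarith [k2', abs_pos.mpr hB1, abs_nonneg a2, abs_nonneg b2]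
      have habseq : |a2| = |b2| := le_antisymm habs_a2b2 habs_b2a2
      have hxy : |(p1:ℝ) - α*q1| = |(p2:ℝ) - α*q2| := by
        have e1 : |a2| = |t| * |(p1:ℝ) - α * q1| := by rw [ha2, abs_mul]
        have e2 : |b2| = |t| * |(p2:ℝ) - α*q2| := by rw [hb2, abs_mul]
        rw [e1, e2] at habseq
        exact mul_left_cancel₀ (ne_of_gt (abs_pos.mpr ht0)) habseq
      rcases abs_eq_abs.mp hxy with h | h
      · by_cases hq : q1 = q2
        · have hpR : (p1:ℝ) = p2 := by rw [hq] at h; linarith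
          have hp : p1 = p2 := by exact_mod_cast hpR
          exact hD0 (by rw [hDdef, hq, hp]; ring)
        · refine absurd ?_ ((irrational_iff_ne_rational α).mp hα (p1 - p2) (q1 - q2) (sub_ne_zero.mpr hq))
          rw [eq_div_iff (by exact_mod_cast sub_ne_zero.mpr hq : ((q1 - q2 : ℤ) : ℝ) ≠ 0)]
          push_cast
          linear_combination -h
      · by_cases hq : q1 = -q2
        · have hpR : (p1:ℝ) = -p2 := by rw [hq] at h; push_cast at h ⊢; linarith
          have hp : p1 = -p2 := by exact_mod_cast hpR
          exact hD0 (by rw [hDdef, hq, hp]; ring)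
        · refine absurd ?_ ((irrational_iff_ne_rational α).mp hα (p1 + p2) (q1 + q2) (by omega))
          rw [eq_div_iff (by exact_mod_cast (by omega : q1 + q2 ≠ 0) : ((q1 + q2 : ℤ) : ℝ) ≠ 0)]
          push_cast
          linear_combination -h


theorem stmt_13 (F : ℝ × ℝ → ℝ)
    (hnonneg : ∀ P, 0 ≤ F P)
    (hzero : ∀ P, F P = 0 ↔ P = 0)
    (hhom : ∀ (t : ℝ) (P), F (t • P) = |t| * F P)
    (htri : ∀ P Q, F (P + Q) ≤ F P + F Q)
    (hsym : ∀ x y : ℝ, F (x, y) = F (|x|, |y|))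
    (t : ℝ) (ht : 0 < t)
    (α : ℝ) (hα : Irrational α)
    (L : Set (ℝ × ℝ))
    (hL : L = {v : ℝ × ℝ | ∃ p q : ℤ, v = ((q : ℝ), (p : ℝ) - α * q)})
    (P P' : ℝ × ℝ)
    (hP : P ∈ L) (hP' : P' ∈ L)
    (hPbd : F (P.1 / t, t * P.2) = 1)
    (hP'bd : F (P'.1 / t, t * P'.2) = 1)
    (hindep : P.1 * P'.2 - P.2 * P'.1 ≠ 0)
    (hadm : ∀ v ∈ L, F (v.1 / t, t * v.2) < 1 → v = 0) :
    ∀ v ∈ L, ∃ m n : ℤ, v = m • P + n • P' := by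
  rw [hL] at hP hP'
  obtain ⟨p1, q1, hPe⟩ := hP
  obtain ⟨p2, q2, hP'e⟩ := hP'
  set D : ℤ := q1 * p2 - p1 * q2 with hDdef
  have hsmul : ∀ (k : ℤ) (X : ℝ × ℝ), k • X = ((k : ℝ) * X.1, (k : ℝ) * X.2) := by
    intro k X
    ext
    · simp [Prod.smul_fst, zsmul_eq_mul]
    · simp [Prod.smul_snd, zsmul_eq_mul]
  have hD0 : D ≠ 0 := by
    intro h
    apply hindep
    rw [hPe, hP'e]
    simp only
    have : ((q1 * p2 - p1 * q2 : ℤ) : ℝ) = 0 := by rw [← hDdef, h]; simp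
    push_cast at this
    nlinarith [this]
  have hPbd1 : F ((q1 : ℝ) / t, t * ((p1 : ℝ) - α * q1)) = 1 := by
    rw [hPe] at hPbd; exact hPbd
  have hP'bd1 : F ((q2 : ℝ) / t, t * ((p2 : ℝ) - α * q2)) = 1 := by
    rw [hP'e] at hP'bd; exact hP'bd
  have hD : D = 1 ∨ D = -1 :=
    stmt13_key F hnonneg hzero hhom htri hsym t ht α hα L hL p1 q1 p2 q2 hPbd1 hP'bd1 hadm
      D hDdef hD0
  intro v hv
  rw [hL] at hv
  obtain ⟨p, q, hv⟩ := hv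
  have hsolve : ∃ m n : ℤ, m * q1 + n * q2 = q ∧ m * p1 + n * p2 = p := by
    rcases hD with hD | hD
    · exact ⟨q * p2 - p * q2, q1 * p - p1 * q, by linear_combination q * hD, by linear_combination p * hD⟩
    · exact ⟨-(q * p2 - p * q2), -(q1 * p - p1 * q), by linear_combination (-q) * hD, by linear_combination (-p) * hD⟩
  obtain ⟨m, n, hq, hp⟩ := hsolve
  refine ⟨m, n, ?_⟩
  rw [hv, hPe, hP'e, hsmul, hsmul]
  have hqR : (m : ℝ) * q1 + n * q2 = q := by exact_mod_cast congrArg (fun z : ℤ => (z : ℝ)) hq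
  have hpR : (m : ℝ) * p1 + n * p2 = p := by exact_mod_cast congrArg (fun z : ℤ => (z : ℝ)) hp
  ext
  · simp only [Prod.fst_add]
    linear_combination -hqR
  · simp only [Prod.snd_add]
    linear_combination α * hqR - hpR
end

section
/- Suppose (u,v) ∈ [1/2, 1) × [0,1] satisfies the system: there exist reals x > x' ≥ 0 and y, y' with y' > |y|, xy' − yx' = 1, |x|+|y| = |x'|+|y'|, and |x+x'|+|y+y'| ≤ |x|+|y|. Then v ≤ 2 − 1/u. -/
theorem stmt_14 (u v x y x' y' : ℝ)
    (hu1 : 1 / 2 ≤ u) (hu2 : u < 1) (hv1 : 0 ≤ v) (hv2 : v ≤ 1)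
    (hx' : 0 ≤ x') (hxx : x' < x)
    (hyy : |y| < y')
    (hdet : x * y' - y * x' = 1)
    (hnorm : |x| + |y| = |x'| + |y'|)
    (hsum : |x + x'| + |y + y'| ≤ |x| + |y|)
    (hu : u = -y / y') (hv : v = x' / x) :
    v ≤ 2 - 1 / u := by
  have hq : 0 < y' := lt_of_le_of_lt (abs_nonneg y) hyy
  have hx0 : 0 < x := lt_of_le_of_lt hx' hxx
  rw [hu, le_div_iff₀ hq] at hu1
  have hy : y < 0 := by nlinarith
  rw [abs_of_neg hy] at hnorm hsum hyy
  rw [abs_of_pos hx0] at hnorm hsum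
  rw [abs_of_nonneg hx', abs_of_pos hq] at hnorm
  rw [abs_of_pos (by linarith : (0:ℝ) < x + x'),
      abs_of_pos (by linarith : (0:ℝ) < y + y')] at hsum
  have key : 1 ≤ 2 * x * (-y) := by
    nlinarith [mul_nonneg (show (0:ℝ) ≤ y' + y by linarith)
      (show (0:ℝ) ≤ -(x' + 2*y + y') by linarith)]
  rw [hv, hu, div_le_iff₀ hx0, one_div_div, sub_mul]
  have h2 : y' / -y * x ≤ 2 * x - x' := by
    rw [div_mul_eq_mul_div, div_le_iff₀ (by linarith : (0:ℝ) < -y)]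
    nlinarith [key]
  linarith
end

section
/- Let 1 ≤ p < ∞ and u ∈ (−1,1), v ∈ [0,1). Set t = ((1−v^p)/(1−|u|^p))^{1/(2p)}. Then the p-norm of the vector (t⁻¹, −u·t)/√(1+uv) equals the p-norm of (t⁻¹·v, t)/√(1+uv), and the square of this common norm equals (1/(1+uv))·((1−|u|^p v^p)²/((1−|u|^p)(1−v^p)))^{1/p}. -/
noncomputable def pnorm (p x y : ℝ) : ℝ := (|x| ^ p + |y| ^ p) ^ (1 / p)

lemma pnorm_div_aux (p x y s : ℝ) (hp : 0 < p) (hs : 0 < s) :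
    pnorm p (x / s) (y / s) = pnorm p x y / s := by
  unfold pnorm
  rw [abs_div, abs_div, abs_of_pos hs, Real.div_rpow (abs_nonneg x) hs.le,
    Real.div_rpow (abs_nonneg y) hs.le, ← add_div,
    Real.div_rpow (add_nonneg (Real.rpow_nonneg (abs_nonneg x) p)
      (Real.rpow_nonneg (abs_nonneg y) p)) (Real.rpow_nonneg hs.le p),
    ← Real.rpow_mul hs.le, mul_one_div, div_self hp.ne', Real.rpow_one]

theorem stmt_18 (p u v : ℝ) (hp : 1 ≤ p)
    (hu1 : -1 < u) (hu2 : u < 1) (hv1 : 0 ≤ v) (hv2 : v < 1) :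
    let t : ℝ := ((1 - v ^ p) / (1 - |u| ^ p)) ^ (1 / (2 * p))
    let s : ℝ := Real.sqrt (1 + u * v)
    pnorm p (t⁻¹ / s) (-u * t / s) = pnorm p (t⁻¹ * v / s) (t / s) ∧
      (pnorm p (t⁻¹ / s) (-u * t / s)) ^ 2 =
        (1 / (1 + u * v)) *
          ((1 - |u| ^ p * v ^ p) ^ 2 / ((1 - |u| ^ p) * (1 - v ^ p))) ^ (1 / p) := by
  intro t s
  have hp0 : (0:ℝ) < p := lt_of_lt_of_le one_pos hp
  have hau : |u| < 1 := abs_lt.2 ⟨hu1, hu2⟩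
  set a := |u| ^ p with ha_def
  set b := v ^ p with hb_def
  have ha0 : 0 ≤ a := Real.rpow_nonneg (abs_nonneg u) p
  have hb0 : 0 ≤ b := Real.rpow_nonneg hv1 p
  have ha1 : a < 1 := by
    rcases eq_or_lt_of_le (abs_nonneg u) with h | h
    · rw [ha_def, ← h, Real.zero_rpow hp0.ne']; norm_num
    · exact Real.rpow_lt_one (abs_nonneg u) hau hp0
  have hb1 : b < 1 := by
    rcases eq_or_lt_of_le hv1 with h | h
    · rw [hb_def, ← h, Real.zero_rpow hp0.ne']; norm_num
    · exact Real.rpow_lt_one hv1 hv2 hp0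
  have h1a : (0:ℝ) < 1 - a := by linarith
  have h1b : (0:ℝ) < 1 - b := by linarith
  have hq : (0:ℝ) < (1 - b) / (1 - a) := div_pos h1b h1a
  have ht : 0 < t := Real.rpow_pos_of_pos hq _
  have huv : 0 < 1 + u * v := by
    nlinarith [neg_abs_le u, abs_nonneg u]
  have hs : 0 < s := Real.sqrt_pos.2 huv
  set α := Real.sqrt (1 - a) with hα_def
  set β := Real.sqrt (1 - b) with hβ_def
  have hα : 0 < α := Real.sqrt_pos.2 h1a
  have hβ : 0 < β := Real.sqrt_pos.2 h1b
  have hα2 : α ^ 2 = 1 - a := Real.sq_sqrt h1a.le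
  have hβ2 : β ^ 2 = 1 - b := Real.sq_sqrt h1b.le
  have htp : t ^ p = β / α := by
    have h1 : t ^ p = ((1 - b) / (1 - a)) ^ ((1:ℝ)/2) := by
      rw [show t = ((1 - b) / (1 - a)) ^ (1 / (2 * p)) from rfl, ← Real.rpow_mul hq.le]
      congr 1
      field_simp
    rw [h1, ← Real.sqrt_eq_rpow, Real.sqrt_div h1b.le]
  have htinvp : t⁻¹ ^ p = α / β := by
    rw [Real.inv_rpow ht.le, htp, inv_div]
  -- common value of the sums
  set X := (1 - a * b) / (α * β) with hX_def
  have hX : 0 < X := by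
    apply div_pos
    · nlinarith
    · positivity
  have hsum1 : |t⁻¹| ^ p + |(-u * t)| ^ p = X := by
    rw [abs_of_pos (inv_pos.2 ht), neg_mul, abs_neg, abs_mul, abs_of_pos ht,
      Real.mul_rpow (abs_nonneg u) ht.le, htinvp, htp, ← ha_def]
    rw [hX_def]
    field_simp
    linear_combination hα2 + a*hβ2
  have hsum2 : |t⁻¹ * v| ^ p + |t| ^ p = X := by
    rw [abs_of_pos ht, abs_mul, abs_of_pos (inv_pos.2 ht), abs_of_nonneg hv1,
      Real.mul_rpow (inv_pos.2 ht).le hv1, htinvp, htp, ← hb_def]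
    rw [hX_def]
    field_simp
    linear_combination b*hα2 + hβ2
  have key1 : pnorm p t⁻¹ (-u * t) = X ^ (1/p) := by unfold pnorm; rw [hsum1]
  have key2 : pnorm p (t⁻¹ * v) t = X ^ (1/p) := by unfold pnorm; rw [hsum2]
  constructor
  · rw [pnorm_div_aux p _ _ s hp0 hs, pnorm_div_aux p _ _ s hp0 hs, key1, key2]
  · rw [pnorm_div_aux p _ _ s hp0 hs, key1, div_pow, Real.sq_sqrt huv.le]
    have hXsq : X ^ 2 = (1 - a * b) ^ 2 / ((1 - a) * (1 - b)) := by
      rw [hX_def, div_pow, mul_pow, hα2, hβ2]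
    have : (X ^ (1/p)) ^ 2 = (X ^ 2) ^ (1/p) := by
      rw [← Real.rpow_natCast (X ^ (1/p)) 2, ← Real.rpow_natCast X 2,
        ← Real.rpow_mul hX.le, ← Real.rpow_mul hX.le]
      norm_num
      ring_nf
    rw [this, hXsq]
    ring
end

section
/- Suppose α is irrational and for every ε > 0 there are arbitrarily large integers q > 0 with |p/q − α| < ε/q² for some integer p. Let F be a norm on ℝ² with F(x,y)=F(|x|,|y|) and F(1,0)=F(0,1)=1. Then for any ε' > 0 there exist arbitrarily large t such that for all integers r and s > 0, F(s/t, t(sα − r)) ≥ 1 − ε'. -/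
/-- For an irrational α and a bound N, integer multiples nα with 1 ≤ n ≤ N stay
at a uniformly positive distance δ from the integers. -/
lemma stmt_19_delta (α : ℝ) (hα : Irrational α) (N : ℤ) :
    ∃ δ : ℝ, 0 < δ ∧ ∀ n : ℤ, 1 ≤ n → n ≤ N → ∀ m : ℤ, δ ≤ |(n : ℝ) * α - m| := by
  rcases lt_or_ge N 1 with hN | hN
  · exact ⟨1, one_pos, fun n h1 h2 m => absurd (h1.trans h2) (not_le.mpr hN)⟩
  · have hne : (Finset.Icc 1 N).Nonempty := ⟨1, Finset.mem_Icc.mpr ⟨le_refl 1, hN⟩⟩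
    set f : ℤ → ℝ := fun n => |(n : ℝ) * α - round ((n : ℝ) * α)| with hf
    refine ⟨(Finset.Icc 1 N).inf' hne f, ?_, ?_⟩
    · apply (Finset.lt_inf'_iff hne).mpr
      intro n hn
      have hn1 : 1 ≤ n := (Finset.mem_Icc.mp hn).1
      have hirr : Irrational ((n : ℝ) * α) := by
        have hn0 : n ≠ 0 := by omega
        exact hα.intCast_mul hn0
      have : (n : ℝ) * α ≠ (round ((n : ℝ) * α) : ℝ) := by
        intro h
        exact hirr.ne_int _ h
      have : (n : ℝ) * α - (round ((n : ℝ) * α) : ℝ) ≠ 0 := sub_ne_zero.mpr this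
      exact abs_pos.mpr this
    · intro n h1 h2 m
      have hmem : n ∈ Finset.Icc 1 N := Finset.mem_Icc.mpr ⟨h1, h2⟩
      exact le_trans (Finset.inf'_le f hmem) (round_le ((n : ℝ) * α) m)

theorem stmt_19 (α : ℝ) (hα : Irrational α)
    (hwa : ∀ ε : ℝ, 0 < ε → ∀ Q : ℤ, ∃ q : ℤ, Q < q ∧ 0 < q ∧
      ∃ p : ℤ, |(p : ℝ) / q - α| < ε / (q : ℝ) ^ 2)
    (F : ℝ × ℝ → ℝ)
    (hnonneg : ∀ P, 0 ≤ F P)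
    (hzero : ∀ P, F P = 0 ↔ P = 0)
    (hhom : ∀ (t : ℝ) (P), F (t • P) = |t| * F P)
    (htri : ∀ P Q, F (P + Q) ≤ F P + F Q)
    (hsym : ∀ x y : ℝ, F (x, y) = F (|x|, |y|))
    (hnorm1 : F (1, 0) = 1) (hnorm2 : F (0, 1) = 1) :
    ∀ ε' : ℝ, 0 < ε' → ∀ T : ℝ, ∃ t : ℝ, T < t ∧
      ∀ r s : ℤ, 0 < s →
        1 - ε' ≤ F ((s : ℝ) / t, t * ((s : ℝ) * α - (r : ℝ))) := by
  -- Lower bounds: F dominates each coordinate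
  have hFx : ∀ x y : ℝ, |x| ≤ F (x, y) := by
    intro x y
    have hswap : F (x, -y) = F (x, y) := by rw [hsym x (-y), hsym x y, abs_neg]
    have h1 : F (2 * x, 0) ≤ F (x, y) + F (x, -y) := by
      have : ((2 : ℝ) * x, (0 : ℝ)) = (x, y) + (x, -y) := by
        simp [Prod.ext_iff]; ring
      rw [this]; exact htri _ _
    have h2 : F (2 * x, 0) = |2 * x| := by
      have : ((2 : ℝ) * x, (0 : ℝ)) = (2 * x) • ((1 : ℝ), (0 : ℝ)) := by
        simp [Prod.ext_iff]
      rw [this, hhom, hnorm1, mul_one]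
    rw [h2, hswap] at h1
    rw [abs_mul, abs_two] at h1
    linarith [h1]
  have hFy : ∀ x y : ℝ, |y| ≤ F (x, y) := by
    intro x y
    have hswap : F (-x, y) = F (x, y) := by rw [hsym (-x) y, hsym x y, abs_neg]
    have h1 : F (0, 2 * y) ≤ F (x, y) + F (-x, y) := by
      have : ((0 : ℝ), (2 : ℝ) * y) = (x, y) + (-x, y) := by
        simp [Prod.ext_iff]; ring
      rw [this]; exact htri _ _
    have h2 : F (0, 2 * y) = |2 * y| := by
      have : ((0 : ℝ), (2 : ℝ) * y) = (2 * y) • ((0 : ℝ), (1 : ℝ)) := by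
        simp [Prod.ext_iff]
      rw [this, hhom, hnorm2, mul_one]
    rw [h2, hswap] at h1
    rw [abs_mul, abs_two] at h1
    linarith [h1]
  intro ε' hε' T
  set ε : ℝ := min ε' 1 with hεdef
  have hεpos : 0 < ε := lt_min hε' one_pos
  have hεle : ε ≤ ε' := min_le_left _ _
  set N : ℤ := max ⌈T⌉ 1 with hNdef
  obtain ⟨δ, hδpos, hδ⟩ := stmt_19_delta α hα N
  -- pick q beyond both N and ε/δ
  obtain ⟨q, hqQ, hqpos, p, hpq⟩ := hwa ε hεpos (max N ⌈ε / δ⌉)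
  have hqN : N < q := lt_of_le_of_lt (le_max_left _ _) hqQ
  have hqεδ : (ε / δ) < q := by
    have : (⌈ε / δ⌉ : ℤ) < q := lt_of_le_of_lt (le_max_right _ _) hqQ
    calc ε / δ ≤ (⌈ε / δ⌉ : ℝ) := Int.le_ceil _
    _ < q := by exact_mod_cast this
  -- reduce p/q
  set d : ℕ := Int.gcd p q with hddef
  have hdpos : 0 < d := Int.gcd_pos_of_ne_zero_right p hqpos.ne'
  obtain ⟨q', hq'⟩ : (d : ℤ) ∣ q := Int.gcd_dvd_right p q
  obtain ⟨p', hp'⟩ : (d : ℤ) ∣ p := Int.gcd_dvd_left p q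
  have hdz : (0 : ℤ) < (d : ℤ) := by exact_mod_cast hdpos
  have hq'pos : 0 < q' := by
    by_contra h
    push_neg at h
    have : q ≤ 0 := by
      rw [hq']
      exact mul_nonpos_of_nonneg_of_nonpos hdz.le h
    omega
  have hq'le : q' ≤ q := by
    rw [hq']
    nlinarith
  have hcop : Int.gcd p' q' = 1 := by
    have h := Int.gcd_div_gcd_div_gcd (i := p) (j := q) (by omega : 0 < Int.gcd p q)
    have hdne : (d : ℤ) ≠ 0 := by exact_mod_cast hdpos.ne'
    have hp2 : p / (d : ℤ) = p' := by rw [hp']; exact Int.mul_ediv_cancel_left _ hdne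
    have hq2 : q / (d : ℤ) = q' := by rw [hq']; exact Int.mul_ediv_cancel_left _ hdne
    rw [hddef] at hp2 hq2
    rw [hp2, hq2] at h
    exact h
  -- basic real facts
  have hqR : (0 : ℝ) < (q : ℝ) := by exact_mod_cast hqpos
  have hq'R : (0 : ℝ) < (q' : ℝ) := by exact_mod_cast hq'pos
  have hdR : (0 : ℝ) < (d : ℝ) := by exact_mod_cast hdpos
  have hfrac : (p' : ℝ) / (q' : ℝ) = (p : ℝ) / (q : ℝ) := by
    rw [hp', hq']
    push_cast
    field_simp
  -- error bound for the reduced fraction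
  have herr : |(q' : ℝ) * α - p'| < ε / q' := by
    have h1 : |(p' : ℝ) / q' - α| < ε / (q : ℝ) ^ 2 := by rw [hfrac]; exact hpq
    have hq'leR : (q' : ℝ) ≤ (q : ℝ) := by exact_mod_cast hq'le
    have h2 : ε / (q : ℝ) ^ 2 ≤ ε / (q' : ℝ) ^ 2 := by
      apply div_le_div_of_nonneg_left hεpos.le (by positivity)
      nlinarith
    have h3 : |(p' : ℝ) / q' - α| < ε / (q' : ℝ) ^ 2 := lt_of_lt_of_le h1 h2
    have h4 : |(q' : ℝ) * α - p'| = (q' : ℝ) * |(p' : ℝ) / q' - α| := by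
      have he : (q' : ℝ) * α - p' = (q' : ℝ) * (α - (p' : ℝ) / q') := by field_simp
      rw [he, abs_mul, abs_of_pos hq'R, abs_sub_comm]
    rw [h4]
    calc (q' : ℝ) * |(p' : ℝ) / q' - α| < (q' : ℝ) * (ε / (q' : ℝ) ^ 2) := by
          exact mul_lt_mul_of_pos_left h3 hq'R
    _ = ε / q' := by field_simp
  -- second error bound: |q'α - p'| < ε/q
  have herr2 : |(q' : ℝ) * α - p'| < ε / q := by
    have h4 : |(q' : ℝ) * α - p'| = (q' : ℝ) * |(p' : ℝ) / q' - α| := by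
      have he : (q' : ℝ) * α - p' = (q' : ℝ) * (α - (p' : ℝ) / q') := by field_simp
      rw [he, abs_mul, abs_of_pos hq'R, abs_sub_comm]
    have h1 : |(p' : ℝ) / q' - α| < ε / (q : ℝ) ^ 2 := by rw [hfrac]; exact hpq
    have hq'leR : (q' : ℝ) ≤ (q : ℝ) := by exact_mod_cast hq'le
    rw [h4]
    calc (q' : ℝ) * |(p' : ℝ) / q' - α| < (q' : ℝ) * (ε / (q : ℝ) ^ 2) :=
          mul_lt_mul_of_pos_left h1 hq'R
    _ ≤ (q : ℝ) * (ε / (q : ℝ) ^ 2) := by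
          apply mul_le_mul_of_nonneg_right hq'leR (by positivity)
    _ = ε / q := by field_simp
  -- q' > N (so q' > T): otherwise δ-separation contradicts small error
  have hq'N : N < q' := by
    by_contra h
    push_neg at h
    have hsep := hδ q' hq'pos h p'
    have hsmall : ε / q < δ := by
      rw [div_lt_iff₀ hqR]
      calc ε = (ε / δ) * δ := by field_simp
      _ < (q : ℝ) * δ := by exact mul_lt_mul_of_pos_right hqεδ hδpos
      _ = δ * q := mul_comm _ _
    linarith [lt_of_le_of_lt (hsep.trans herr2.le) hsmall]
  -- take t = q'
  refine ⟨(q' : ℝ), ?_, ?_⟩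
  · have h1 : T ≤ (⌈T⌉ : ℝ) := Int.le_ceil T
    have h2 : (⌈T⌉ : ℤ) ≤ N := le_max_left _ _
    have : (N : ℝ) < (q' : ℝ) := by exact_mod_cast hq'N
    have : ((⌈T⌉ : ℤ) : ℝ) ≤ (N : ℝ) := by exact_mod_cast h2
    linarith
  · intro r s hs
    rcases le_or_gt q' s with hcase | hcase
    · -- s ≥ q' : use the first coordinate
      have h1 : |(s : ℝ) / (q' : ℝ)| ≤ F ((s : ℝ) / q', (q' : ℝ) * ((s : ℝ) * α - r)) :=
        hFx _ _
      have hsR : (q' : ℝ) ≤ (s : ℝ) := by exact_mod_cast hcase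
      have h2 : (1 : ℝ) ≤ (s : ℝ) / (q' : ℝ) := (one_le_div hq'R).mpr hsR
      have h3 : (s : ℝ) / (q' : ℝ) ≤ |(s : ℝ) / (q' : ℝ)| := le_abs_self _
      linarith
    · -- 0 < s < q' : use the second coordinate
      have h1 : |(q' : ℝ) * ((s : ℝ) * α - r)| ≤
          F ((s : ℝ) / q', (q' : ℝ) * ((s : ℝ) * α - r)) := hFy _ _
      set k : ℤ := s * p' - r * q' with hkdef
      have hk : k ≠ 0 := by
        intro h0
        have heq : s * p' = r * q' := by omega
        have hdvd : q' ∣ s * p' := ⟨r, by linarith [heq]⟩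
        have hcop' : IsCoprime q' p' := by
          rw [Int.isCoprime_iff_gcd_eq_one, Int.gcd_comm]
          exact hcop
        have : q' ∣ s := hcop'.dvd_of_dvd_mul_right hdvd
        have := Int.le_of_dvd hs this
        omega
      have hk1 : (1 : ℝ) ≤ |(k : ℝ)| := by
        have : (1 : ℤ) ≤ |k| := Int.one_le_abs hk
        calc (1 : ℝ) ≤ (|k| : ℝ) := by exact_mod_cast this
        _ = |(k : ℝ)| := by push_cast; rfl
      have hdecomp : (q' : ℝ) * ((s : ℝ) * α - r) = (s : ℝ) * ((q' : ℝ) * α - p') + k := by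
        rw [hkdef]; push_cast; ring
      have hsbd : (s : ℝ) * |(q' : ℝ) * α - p'| < ε := by
        have hs1 : (1 : ℝ) ≤ (s : ℝ) := by exact_mod_cast hs
        have hsq' : (s : ℝ) ≤ (q' : ℝ) := by exact_mod_cast hcase.le
        have herr' : |(q' : ℝ) * α - p'| < ε / q' := herr
        calc (s : ℝ) * |(q' : ℝ) * α - p'| ≤ (q' : ℝ) * |(q' : ℝ) * α - p'| := by
              apply mul_le_mul_of_nonneg_right hsq' (abs_nonneg _)
        _ < (q' : ℝ) * (ε / q') := mul_lt_mul_of_pos_left herr' hq'R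
        _ = ε := by field_simp
      have hlow : 1 - ε ≤ |(q' : ℝ) * ((s : ℝ) * α - r)| := by
        rw [hdecomp]
        have habs : |(k : ℝ)| - |(s : ℝ) * ((q' : ℝ) * α - p')| ≤
            |(s : ℝ) * ((q' : ℝ) * α - p') + (k : ℝ)| := by
          calc |(k : ℝ)| - |(s : ℝ) * ((q' : ℝ) * α - p')| ≤
              |(k : ℝ) + (s : ℝ) * ((q' : ℝ) * α - p')| := by
                have := abs_add_le ((k : ℝ) + (s : ℝ) * ((q' : ℝ) * α - p'))
                  (-((s : ℝ) * ((q' : ℝ) * α - p')))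
                simp only [add_neg_cancel_right, abs_neg] at this
                linarith
          _ = |(s : ℝ) * ((q' : ℝ) * α - p') + (k : ℝ)| := by rw [add_comm]
        have : |(s : ℝ) * ((q' : ℝ) * α - p')| < ε := by
          rw [abs_mul]
          have hs0 : (0 : ℝ) ≤ (s : ℝ) := by positivity
          rw [abs_of_nonneg hs0]
          exact hsbd
        linarith
      linarith [hεle]
end
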